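/- arXiv:2002.10338 — 4 statements merged into one kernel-verified Lean document; each statement's English description precedes it below -/
import Mathlib

section
/- Let W > 0 and M > 0 be real numbers. Every point (u, g) ∈ ℝ² with g·|g| = W·u and −M ≤ g ≤ M satisfies (W/(2·M))·u − M/2 ≤ g ≤ (W/(2·M))·u + M/2. (Validity of the linear ECH constraints (18b)–(18c), given by the tangent lines to the Weymouth curve at its two endpoints, for every point satisfying the bidirectional Weymouth equation.) -/
/-- Validity of the linear ECH constraints (18b)-(18c) for every point of the
bidirectional Weymouth set. -/
theorem ech_linear_constraints_valid (W M : ℝ) (hW : 0 < W) (hM : 0 < M) :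
    ∀ u g : ℝ, g * |g| = W * u → -M ≤ g → g ≤ M →
      (W / (2 * M)) * u - M / 2 ≤ g ∧ g ≤ (W / (2 * M)) * u + M / 2 := by
  intro u g heq h1 h2
  have hu : u = g * |g| / W := by field_simp; linear_combination -heq
  subst hu
  have hWM : W / (2 * M) * (g * |g| / W) = g * |g| / (2 * M) := by
    field_simp
  rw [hWM]
  have hpos : (0:ℝ) < 2 * M := by positivity
  constructor
  · rw [sub_le_iff_le_add, div_le_iff₀ hpos]
    rcases abs_cases g with ⟨h, _⟩ | ⟨h, _⟩ <;> rw [h] <;>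
      nlinarith [sq_nonneg (g - M), sq_nonneg (g + M)]
  · rw [← sub_le_iff_le_add, sub_le_iff_le_add, ← sub_le_iff_le_add, le_div_iff₀ hpos]
    rcases abs_cases g with ⟨h, _⟩ | ⟨h, _⟩ <;> rw [h] <;>
      nlinarith [sq_nonneg (g - M), sq_nonneg (g + M)]
end

section
/- Let W > 0 and M > 0 be real numbers, let S = {(u, g) ∈ ℝ² : g·|g| = W·u ∧ −M ≤ g ≤ M}, and let E = {(u, g) ∈ ℝ² : −M ≤ g ≤ M ∧ (W/(2·M))·u − M/2 ≤ g ∧ g ≤ (W/(2·M))·u + M/2}. Then E is a convex set and the convex hull of S is contained in E. (The ECH of the bidirectional Weymouth equation is convex and contains the convex hull of the Weymouth set.) -/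
/-- The ECH of the bidirectional Weymouth equation is convex and contains
the convex hull of the Weymouth set. -/
theorem ech_is_convex_and_contains_convex_hull (W M : ℝ) (hW : 0 < W) (hM : 0 < M) :
    Convex ℝ {p : ℝ × ℝ | -M ≤ p.2 ∧ p.2 ≤ M ∧
        (W / (2 * M)) * p.1 - M / 2 ≤ p.2 ∧ p.2 ≤ (W / (2 * M)) * p.1 + M / 2} ∧
      convexHull ℝ {p : ℝ × ℝ | p.2 * |p.2| = W * p.1 ∧ -M ≤ p.2 ∧ p.2 ≤ M} ⊆
        {p : ℝ × ℝ | -M ≤ p.2 ∧ p.2 ≤ M ∧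
          (W / (2 * M)) * p.1 - M / 2 ≤ p.2 ∧ p.2 ≤ (W / (2 * M)) * p.1 + M / 2} := by
  have hconv : Convex ℝ {p : ℝ × ℝ | -M ≤ p.2 ∧ p.2 ≤ M ∧
      (W / (2 * M)) * p.1 - M / 2 ≤ p.2 ∧ p.2 ≤ (W / (2 * M)) * p.1 + M / 2} := by
    rintro x ⟨hx1, hx2, hx3, hx4⟩ y ⟨hy1, hy2, hy3, hy4⟩ a b ha hb hab
    have h2 : (a • x + b • y).2 = a * x.2 + b * y.2 := rfl
    have h1 : (a • x + b • y).1 = a * x.1 + b * y.1 := rfl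
    refine ⟨?_, ?_, ?_, ?_⟩ <;> simp only [h1, h2] <;> nlinarith [mul_le_mul_of_nonneg_left hx1 ha,
      mul_le_mul_of_nonneg_left hx2 ha, mul_le_mul_of_nonneg_left hx3 ha,
      mul_le_mul_of_nonneg_left hx4 ha, mul_le_mul_of_nonneg_left hy1 hb,
      mul_le_mul_of_nonneg_left hy2 hb, mul_le_mul_of_nonneg_left hy3 hb,
      mul_le_mul_of_nonneg_left hy4 hb]
  refine ⟨hconv, convexHull_min ?_ hconv⟩
  rintro ⟨u, g⟩ ⟨heq, h1, h2⟩
  have hM' : (0:ℝ) < 2 * M := by linarith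
  have hu : (W / (2 * M)) * u = g * |g| / (2 * M) := by
    field_simp
    linarith [heq]
  refine ⟨h1, h2, ?_, ?_⟩ <;> simp only [hu]
  · rw [sub_le_iff_le_add, div_le_iff₀ hM']
    rcases abs_cases g with ⟨h, _⟩ | ⟨h, _⟩ <;> rw [h] <;> nlinarith
  · rw [← sub_le_iff_le_add, le_div_iff₀ hM']
    rcases abs_cases g with ⟨h, _⟩ | ⟨h, _⟩ <;> rw [h] <;> nlinarith
end

section
/- Let W > 0 and let a, b be real numbers with 0 ≤ a < b. Then the convex hull (over ℝ) of the set {(u, g) ∈ ℝ² : g² = W·u ∧ a ≤ g ≤ b} equals the set {(u, g) ∈ ℝ² : g² ≤ W·u ∧ W·u ≤ (a + b)·g − a·b}. (For the unidirectional Weymouth equation, the ECH described by constraints (19a)–(19b) coincides with the convex hull of the Weymouth set.) -/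
/-- For the unidirectional Weymouth equation, the ECH described by constraints
(19a)-(19b) coincides with the convex hull of the Weymouth set. -/
theorem ech_eq_convex_hull_unidirectional (W a b : ℝ) (hW : 0 < W)
    (ha : 0 ≤ a) (hab : a < b) :
    convexHull ℝ {p : ℝ × ℝ | p.2 ^ 2 = W * p.1 ∧ a ≤ p.2 ∧ p.2 ≤ b} =
      {p : ℝ × ℝ | p.2 ^ 2 ≤ W * p.1 ∧ W * p.1 ≤ (a + b) * p.2 - a * b} := by
  set S : Set (ℝ × ℝ) := {p : ℝ × ℝ | p.2 ^ 2 = W * p.1 ∧ a ≤ p.2 ∧ p.2 ≤ b} with hS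
  have hWne : W ≠ 0 := ne_of_gt hW
  have hba : b - a ≠ 0 := by linarith
  -- RHS is convex
  have hC : Convex ℝ {p : ℝ × ℝ | p.2 ^ 2 ≤ W * p.1 ∧ W * p.1 ≤ (a + b) * p.2 - a * b} := by
    rintro ⟨u1, g1⟩ ⟨h11, h12⟩ ⟨u2, g2⟩ ⟨h21, h22⟩ s t hs ht hst
    constructor
    · simp only [Prod.smul_mk, Prod.mk_add_mk, smul_eq_mul]
      nlinarith [mul_nonneg (mul_nonneg hs ht) (sq_nonneg (g1 - g2)),
        mul_le_mul_of_nonneg_left h11 hs, mul_le_mul_of_nonneg_left h21 ht]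
    · simp only [Prod.smul_mk, Prod.mk_add_mk, smul_eq_mul]
      have hts : t = 1 - s := by linarith
      subst hts
      have e1 := mul_le_mul_of_nonneg_left h12 hs
      have e2 := mul_le_mul_of_nonneg_left h22 ht
      simp only at e1 e2
      nlinarith [e1, e2]
  apply Set.Subset.antisymm
  · apply convexHull_min _ hC
    rintro ⟨u, g⟩ ⟨heq, hag, hgb⟩
    refine ⟨le_of_eq heq, ?_⟩
    have : W * u = g ^ 2 := heq.symm
    nlinarith [mul_nonneg (sub_nonneg.2 hag) (sub_nonneg.2 hgb)]
  · rintro ⟨u, g⟩ ⟨h1, h2⟩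
    simp only [Set.mem_setOf_eq] at h1 h2
    -- derive a ≤ g ≤ b
    have hag : a ≤ g := by nlinarith
    have hgb : g ≤ b := by nlinarith
    -- three points of S
    have hpa : ((a ^ 2 / W, a) : ℝ × ℝ) ∈ S := by
      refine ⟨?_, le_refl a, le_of_lt hab⟩
      field_simp
    have hpb : ((b ^ 2 / W, b) : ℝ × ℝ) ∈ S := by
      refine ⟨?_, le_of_lt hab, le_refl b⟩
      field_simp
    have hpg : ((g ^ 2 / W, g) : ℝ × ℝ) ∈ S := by
      refine ⟨?_, hag, hgb⟩
      field_simp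
    have hconv := convex_convexHull ℝ S
    have hpa' := subset_convexHull ℝ S hpa
    have hpb' := subset_convexHull ℝ S hpb
    have hpg' := subset_convexHull ℝ S hpg
    -- chord point at height g
    set t : ℝ := (g - a) / (b - a) with ht
    have ht0 : 0 ≤ t := div_nonneg (by linarith) (by linarith)
    have ht1 : 1 - t ≥ 0 := by
      have : t ≤ 1 := by
        rw [ht, div_le_one (by linarith : (0:ℝ) < b - a)]; linarith
      linarith
    have hc : (1 - t) • ((a ^ 2 / W, a) : ℝ × ℝ) + t • ((b ^ 2 / W, b) : ℝ × ℝ)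
        ∈ convexHull ℝ S := hconv hpa' hpb' ht1 ht0 (by ring)
    have hceq : (1 - t) • ((a ^ 2 / W, a) : ℝ × ℝ) + t • ((b ^ 2 / W, b) : ℝ × ℝ)
        = ((((a + b) * g - a * b) / W, g) : ℝ × ℝ) := by
      rw [ht]
      apply Prod.ext
      · simp only [Prod.smul_mk, Prod.mk_add_mk, smul_eq_mul]
        field_simp
        ring
      · simp only [Prod.smul_mk, Prod.mk_add_mk, smul_eq_mul]
        field_simp
        ring
    rw [hceq] at hc
    -- combine with parabola point
    by_cases hD : W * u = g ^ 2
    · have hu : u = g ^ 2 / W := by field_simp; linarith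
      have : ((u, g) : ℝ × ℝ) ∈ S := ⟨by rw [hu]; field_simp, hag, hgb⟩
      exact subset_convexHull ℝ S this
    · have hDpos : 0 < (a + b) * g - a * b - g ^ 2 := by
        have : g ^ 2 < W * u := lt_of_le_of_ne h1 (fun h => hD h.symm)
        linarith
      set s : ℝ := (W * u - g ^ 2) / ((a + b) * g - a * b - g ^ 2) with hsdef
      have hs0 : 0 ≤ s := div_nonneg (by linarith) (le_of_lt hDpos)
      have hs1 : 1 - s ≥ 0 := by
        have : s ≤ 1 := by
          rw [hsdef, div_le_one hDpos]; linarith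
        linarith
      have hmem : (1 - s) • ((g ^ 2 / W, g) : ℝ × ℝ)
          + s • ((((a + b) * g - a * b) / W, g) : ℝ × ℝ) ∈ convexHull ℝ S :=
        hconv hpg' hc hs1 hs0 (by ring)
      have heq2 : (1 - s) • ((g ^ 2 / W, g) : ℝ × ℝ)
          + s • ((((a + b) * g - a * b) / W, g) : ℝ × ℝ) = ((u, g) : ℝ × ℝ) := by
        rw [hsdef]
        apply Prod.ext
        · simp only [Prod.smul_mk, Prod.mk_add_mk, smul_eq_mul]
          rw [show (1 - (W * u - g ^ 2) / ((a + b) * g - a * b - g ^ 2)) * (g ^ 2 / W)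
              + (W * u - g ^ 2) / ((a + b) * g - a * b - g ^ 2) * (((a + b) * g - a * b) / W)
              = (g ^ 2 + (W * u - g ^ 2) / ((a + b) * g - a * b - g ^ 2)
                * ((a + b) * g - a * b - g ^ 2)) / W by ring,
            div_mul_cancel₀ _ hDpos.ne', div_eq_iff hWne]
          ring
        · simp only [Prod.smul_mk, Prod.mk_add_mk, smul_eq_mul]
          ring
      rwa [heq2] at hmem
end

section
/- Let W > 0 and M > 0 be real numbers, set t = (√2 − 1)·M, and define L : ℝ → ℝ by L g = g² if g ≥ t and L g = 2·t·g − t² otherwise. Then the convex hull (over ℝ) of the set S = {(u, g) ∈ ℝ² : g·|g| = W·u ∧ −M ≤ g ≤ M} equals the set {(u, g) ∈ ℝ² : −M ≤ g ≤ M ∧ L g ≤ W·u ∧ W·u ≤ −L (−g)}. (The boundary of the convex hull of the bidirectional Weymouth set consists of the two tangent lines from the endpoints (±M²/W, ±M) to the opposite parabolic branch together with the outermost arcs of the Weymouth curve.) -/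
set_option maxHeartbeats 2000000 in
/-- The convex hull of the bidirectional Weymouth set is bounded by two tangent
lines together with the outermost arcs of the Weymouth curve. -/
theorem convex_hull_bidirectional_weymouth (W M t : ℝ) (hW : 0 < W) (hM : 0 < M)
    (ht : t = (Real.sqrt 2 - 1) * M) (L : ℝ → ℝ)
    (hL : ∀ g : ℝ, L g = if t ≤ g then g ^ 2 else 2 * t * g - t ^ 2) :
    convexHull ℝ {p : ℝ × ℝ | p.2 * |p.2| = W * p.1 ∧ -M ≤ p.2 ∧ p.2 ≤ M} =
      {p : ℝ × ℝ | -M ≤ p.2 ∧ p.2 ≤ M ∧ L p.2 ≤ W * p.1 ∧ W * p.1 ≤ -L (-p.2)} := by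
  have hW' : W ≠ 0 := ne_of_gt hW
  set S : Set (ℝ × ℝ) := {p : ℝ × ℝ | p.2 * |p.2| = W * p.1 ∧ -M ≤ p.2 ∧ p.2 ≤ M} with hS
  have hs2 : Real.sqrt 2 ^ 2 = 2 := Real.sq_sqrt (by norm_num)
  have hs2' : 1 < Real.sqrt 2 := by nlinarith [Real.sqrt_nonneg 2]
  have hs2'' : Real.sqrt 2 < 2 := by nlinarith [Real.sqrt_nonneg 2]
  have ht0 : 0 < t := by rw [ht]; nlinarith
  have htM : t < M := by rw [ht]; nlinarith
  have hkey : t ^ 2 + 2 * t * M - M ^ 2 = 0 := by rw [ht]; nlinarith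
  -- tangent bound: for c ≥ t, the tangent line at c lies below L
  have htan : ∀ c g : ℝ, t ≤ c → 2 * c * g - c ^ 2 ≤ L g := by
    intro c g hc
    rw [hL g]
    split_ifs with h
    · nlinarith [sq_nonneg (g - c)]
    · push_neg at h
      nlinarith [mul_nonneg (by linarith : (0:ℝ) ≤ c - t) (by linarith : (0:ℝ) ≤ c + t - 2 * g)]
  -- convexity of L
  have hconv : ∀ g₁ g₂ a b : ℝ, 0 ≤ a → 0 ≤ b → a + b = 1 →
      L (a * g₁ + b * g₂) ≤ a * L g₁ + b * L g₂ := by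
    intro g₁ g₂ a b ha hb hab
    by_cases hc : t ≤ a * g₁ + b * g₂
    · have h1 := mul_le_mul_of_nonneg_left (htan (a * g₁ + b * g₂) g₁ hc) ha
      have h2 := mul_le_mul_of_nonneg_left (htan (a * g₁ + b * g₂) g₂ hc) hb
      rw [hL, if_pos hc]
      nlinarith [h1, h2]
    · have h1 := mul_le_mul_of_nonneg_left (htan t g₁ le_rfl) ha
      have h2 := mul_le_mul_of_nonneg_left (htan t g₂ le_rfl) hb
      rw [hL, if_neg hc]
      nlinarith [h1, h2]
  -- L g ≤ g * |g| on [-M, M]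
  have hLle : ∀ g : ℝ, -M ≤ g → g ≤ M → L g ≤ g * |g| := by
    intro g hg1 hg2
    rw [hL]
    split_ifs with h
    · rw [abs_of_nonneg (by linarith)]; nlinarith
    · push_neg at h
      rcases le_or_gt 0 g with hg | hg
      · rw [abs_of_nonneg hg]; nlinarith [sq_nonneg (g - t)]
      · rw [abs_of_neg hg]
        have hprod : 0 ≤ (g + M) * (t ^ 2 - M * g) :=
          mul_nonneg (by linarith) (by nlinarith)
        have hkg : g * (t ^ 2 + 2 * t * M - M ^ 2) = 0 := by rw [hkey, mul_zero]
        nlinarith [hprod, hkg, hM]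
  -- S is symmetric
  have hSneg : -S = S := by
    ext p
    simp only [Set.mem_neg, hS, Set.mem_setOf_eq, Prod.fst_neg, Prod.snd_neg, abs_neg]
    constructor
    · rintro ⟨h1, h2, h3⟩; exact ⟨by nlinarith, by linarith, by linarith⟩
    · rintro ⟨h1, h2, h3⟩; exact ⟨by nlinarith, by linarith, by linarith⟩
  have hHneg : ∀ q : ℝ × ℝ, q ∈ convexHull ℝ S → -q ∈ convexHull ℝ S := by
    intro q hq
    have : -q ∈ -convexHull ℝ S := Set.neg_mem_neg.mpr hq
    rwa [← convexHull_neg, hSneg] at this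
  -- lower endpoint in the hull
  have hA : ∀ g : ℝ, -M ≤ g → g ≤ M → (L g / W, g) ∈ convexHull ℝ S := by
    intro g hg1 hg2
    by_cases h : t ≤ g
    · apply subset_convexHull
      refine ⟨?_, hg1, hg2⟩
      simp only
      rw [hL, if_pos h, abs_of_nonneg (by linarith : (0:ℝ) ≤ g)]
      field_simp
    · push_neg at h
      have hP : ((-(M ^ 2) / W, -M) : ℝ × ℝ) ∈ S := by
        refine ⟨?_, by linarith, by linarith⟩
        simp only
        rw [abs_of_neg (by linarith : -M < 0)]
        field_simp
      have hQ : ((t ^ 2 / W, t) : ℝ × ℝ) ∈ S := by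
        refine ⟨?_, by linarith, by linarith⟩
        simp only
        rw [abs_of_nonneg (by linarith : (0:ℝ) ≤ t)]
        field_simp
      have htM0 : (0:ℝ) < t + M := by linarith
      set lam : ℝ := (g + M) / (t + M) with hlam
      have hlam0 : 0 ≤ lam := div_nonneg (by linarith) (by linarith)
      have hlam1 : lam ≤ 1 := by
        rw [hlam, div_le_one htM0]; linarith
      have := (convex_convexHull ℝ S) (subset_convexHull ℝ S hP) (subset_convexHull ℝ S hQ)
        (by linarith : (0:ℝ) ≤ 1 - lam) hlam0 (by ring)
      have heq : (1 - lam) • ((-(M ^ 2) / W, -M) : ℝ × ℝ) + lam • ((t ^ 2 / W, t) : ℝ × ℝ)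
          = (L g / W, g) := by
        rw [hL, if_neg (by linarith : ¬ t ≤ g)]
        have h2 : (1 - lam) * (-M) + lam * t = g := by
          rw [hlam]; field_simp; ring
        have h1 : (1 - lam) * (-(M ^ 2) / W) + lam * (t ^ 2 / W) = (2 * t * g - t ^ 2) / W := by
          rw [hlam]; field_simp
          linear_combination (t - g) * hkey
        simp only [Prod.smul_mk, Prod.mk_add_mk, smul_eq_mul]
        exact Prod.ext h1 h2
      rwa [heq] at this
  -- upper endpoint in the hull
  have hB : ∀ g : ℝ, -M ≤ g → g ≤ M → (-L (-g) / W, g) ∈ convexHull ℝ S := by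
    intro g hg1 hg2
    have := hHneg _ (hA (-g) (by linarith) (by linarith))
    simpa [neg_div] using this
  apply le_antisymm
  · -- convexHull S ⊆ T
    apply convexHull_min
    · rintro p ⟨heq, h1, h2⟩
      refine ⟨h1, h2, ?_, ?_⟩
      · calc L p.2 ≤ p.2 * |p.2| := hLle p.2 h1 h2
          _ = W * p.1 := heq
      · have h3 := hLle (-p.2) (by linarith) (by linarith)
        rw [abs_neg] at h3
        have : (-p.2) * |p.2| = -(p.2 * |p.2|) := by ring
        rw [this, heq] at h3
        linarith
    · -- T is convex
      rintro p ⟨hp1, hp2, hp3, hp4⟩ q ⟨hq1, hq2, hq3, hq4⟩ a b ha hb hab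
      have hsnd : (a • p + b • q).2 = a * p.2 + b * q.2 := rfl
      have hfst : (a • p + b • q).1 = a * p.1 + b * q.1 := rfl
      refine ⟨?_, ?_, ?_, ?_⟩
      · rw [hsnd]; nlinarith [mul_le_mul_of_nonneg_left hp1 ha, mul_le_mul_of_nonneg_left hq1 hb]
      · rw [hsnd]; nlinarith [mul_le_mul_of_nonneg_left hp2 ha, mul_le_mul_of_nonneg_left hq2 hb]
      · rw [hsnd, hfst]
        have := hconv p.2 q.2 a b ha hb hab
        nlinarith [mul_le_mul_of_nonneg_left hp3 ha, mul_le_mul_of_nonneg_left hq3 hb]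
      · rw [hsnd, hfst]
        have hneg : -(a * p.2 + b * q.2) = a * (-p.2) + b * (-q.2) := by ring
        rw [hneg]
        have := hconv (-p.2) (-q.2) a b ha hb hab
        nlinarith [mul_le_mul_of_nonneg_left hp4 ha, mul_le_mul_of_nonneg_left hq4 hb]
  · -- T ⊆ convexHull S
    rintro p ⟨h1, h2, h3, h4⟩
    set u₁ : ℝ := L p.2 / W with hu1
    set u₂ : ℝ := -L (-p.2) / W with hu2
    have hA' := hA p.2 h1 h2
    have hB' := hB p.2 h1 h2
    have hle1 : u₁ ≤ p.1 := by rw [hu1, div_le_iff₀ hW]; linarith [mul_comm p.1 W]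
    have hle2 : p.1 ≤ u₂ := by rw [hu2, le_div_iff₀ hW]; linarith [mul_comm p.1 W]
    rcases eq_or_lt_of_le (le_trans hle1 hle2) with hd | hd
    · have hp1 : p.1 = u₁ := le_antisymm (by rw [hd]; exact hle2) hle1
      have : p = (u₁, p.2) := Prod.ext hp1 rfl
      rwa [this]
    · set mu : ℝ := (p.1 - u₁) / (u₂ - u₁) with hmu
      have hd0 : (0:ℝ) < u₂ - u₁ := by linarith
      have hmu0 : 0 ≤ mu := div_nonneg (by linarith) (by linarith)
      have hmu1 : mu ≤ 1 := by rw [hmu, div_le_one hd0]; linarith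
      have hmem := (convex_convexHull ℝ S) hA' hB'
        (by linarith : (0:ℝ) ≤ 1 - mu) hmu0 (by ring)
      have heq : (1 - mu) • ((u₁, p.2) : ℝ × ℝ) + mu • ((u₂, p.2) : ℝ × ℝ) = p := by
        have h1' : (1 - mu) * u₁ + mu * u₂ = p.1 := by
          rw [hmu]; field_simp; ring
        have h2' : (1 - mu) * p.2 + mu * p.2 = p.2 := by ring
        simp only [Prod.smul_mk, Prod.mk_add_mk, smul_eq_mul]
        exact Prod.ext h1' h2'
      rwa [heq] at hmem
end
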